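/- Let A, B ⊆ ℤ be finite nonempty sets and let U = {0, 1}. Then |A + B + U| ≥ 2 · |A|^{1/2} · |B|^{1/2}. -/

import Mathlib

open scoped Pointwise

theorem sumset_with_zero_one
    (A B : Finset ℤ) (hA : A.Nonempty) (hB : B.Nonempty) :
    ((A + B + ({0, 1} : Finset ℤ)).card : ℝ) ≥
      2 * Real.sqrt A.card * Real.sqrt B.card := by
  have hU : ({0, 1} : Finset ℤ).Nonempty := ⟨0, by decide⟩
  have hAB : A.card + B.card - 1 ≤ (A + B).card :=
    cauchy_davenport_add_of_linearOrder_isCancelAdd hA hB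
  have h2 : (A + B).card + 2 - 1 ≤ (A + B + ({0, 1} : Finset ℤ)).card := by
    have := cauchy_davenport_add_of_linearOrder_isCancelAdd (hA.add hB) hU
    simpa using this
  have hABpos : 1 ≤ (A + B).card := Finset.card_pos.2 (hA.add hB)
  have hkey : A.card + B.card ≤ (A + B + ({0, 1} : Finset ℤ)).card := by omega
  have h1 : (0:ℝ) ≤ Real.sqrt A.card := Real.sqrt_nonneg _
  have h2' : (0:ℝ) ≤ Real.sqrt B.card := Real.sqrt_nonneg _
  have hsq : 2 * Real.sqrt A.card * Real.sqrt B.card ≤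
      Real.sqrt A.card ^ 2 + Real.sqrt B.card ^ 2 := by
    nlinarith [sq_nonneg (Real.sqrt A.card - Real.sqrt B.card)]
  rw [Real.sq_sqrt (by positivity), Real.sq_sqrt (by positivity)] at hsq
  calc 2 * Real.sqrt A.card * Real.sqrt B.card ≤ (A.card : ℝ) + B.card := hsq
    _ ≤ _ := by exact_mod_cast hkey
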